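/- Let d ≥ 1, let U, A, B be d × d unitary matrices, and let σ be a Hermitian d × d matrix with σ² = I. Define f(α) := C_HST(U, A·e^{−iασ/2}·B) for α ∈ ℝ. Then f is differentiable and satisfies the parameter-shift rule f'(α) = (1/2)( f(α + π/2) − f(α − π/2) ) for all α ∈ ℝ. -/

import Mathlib

open Matrix Complex

noncomputable section

/-- The Hilbert-Schmidt test cost `C_HST(U,V) = 1 - |Tr(V†U)|²/d²` for `d × d` matrices. -/
def CHSTd (d : ℕ) (U V : Matrix (Fin d) (Fin d) ℂ) : ℝ :=
  1 - ‖(Vᴴ * U).trace‖ ^ 2 / (d : ℝ) ^ 2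

/-- The rotation gate `G(α) = e^{-iασ/2}` generated by `σ`. -/
def rotGate (d : ℕ) (σ : Matrix (Fin d) (Fin d) ℂ) (α : ℝ) :
    Matrix (Fin d) (Fin d) ℂ :=
  NormedSpace.exp ((-(α / 2 : ℝ) * Complex.I : ℂ) • σ)

lemma rotGate_eq (d : ℕ) (σ : Matrix (Fin d) (Fin d) ℂ) (hinv : σ * σ = 1) (β : ℝ) :
    rotGate d σ β = (Real.cos (β / 2) : ℂ) • (1 : Matrix (Fin d) (Fin d) ℂ)
      - ((Real.sin (β / 2) : ℂ) * Complex.I) • σ := by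
  set θ : ℝ := β / 2 with hθ
  set z : ℂ := (-(β / 2 : ℝ) * Complex.I : ℂ) with hz
  have hz2 : z ^ 2 = -(θ : ℂ) ^ 2 := by
    simp [hz, hθ, mul_pow, Complex.I_sq]
  have hzpow : ∀ n : ℕ, z ^ (2 * n) = (-1 : ℂ) ^ n * (θ : ℂ) ^ (2 * n) := by
    intro n
    rw [pow_mul, hz2, pow_mul, neg_pow ((θ:ℂ)^2), mul_comm]
  have hσpow : ∀ n : ℕ, σ ^ (2 * n) = 1 := by
    intro n
    rw [pow_mul, show σ ^ 2 = 1 by rw [sq, hinv], one_pow]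
  rw [rotGate, NormedSpace.exp_eq_tsum (𝕂 := ℂ)]
  refine HasSum.tsum_eq ?_
  have heq : (fun n : ℕ => ((((2 * n).factorial : ℕ) : ℂ))⁻¹ • (z • σ) ^ (2 * n))
      = fun n : ℕ => ((-1 : ℂ) ^ n * (θ : ℂ) ^ (2 * n) / (((2 * n).factorial : ℕ) : ℂ))
        • (1 : Matrix (Fin d) (Fin d) ℂ) := by
    funext n
    rw [smul_pow, hσpow, hzpow, smul_smul]
    congr 1
    rw [div_eq_mul_inv, mul_comm]
  have heven : HasSum (fun n : ℕ => ((((2 * n).factorial : ℕ) : ℂ))⁻¹ • (z • σ) ^ (2 * n))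
      ((Real.cos θ : ℂ) • (1 : Matrix (Fin d) (Fin d) ℂ)) := by
    have h := (Complex.hasSum_cos (θ : ℂ)).smul_const (1 : Matrix (Fin d) (Fin d) ℂ)
    rw [← Complex.ofReal_cos] at h
    rw [heq]
    exact h
  have hoeq : (fun n : ℕ => ((((2 * n + 1).factorial : ℕ) : ℂ))⁻¹ • (z • σ) ^ (2 * n + 1))
      = fun n : ℕ => ((-Complex.I) * ((-1 : ℂ) ^ n * (θ : ℂ) ^ (2 * n + 1)
          / (((2 * n + 1).factorial : ℕ) : ℂ))) • σ := by
    funext n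
    rw [smul_pow]
    have hs : σ ^ (2 * n + 1) = σ := by rw [pow_succ, hσpow, one_mul]
    rw [hs, smul_smul]
    congr 1
    rw [pow_succ, hzpow, hz]
    have hfac : ((((2 * n + 1).factorial : ℕ)) : ℂ) ≠ 0 :=
      Nat.cast_ne_zero.mpr (Nat.factorial_ne_zero _)
    field_simp
    push_cast [hθ]
    ring
  have hodd : HasSum (fun n : ℕ => ((((2 * n + 1).factorial : ℕ) : ℂ))⁻¹ • (z • σ) ^ (2 * n + 1))
      ((-((Real.sin θ : ℂ) * Complex.I)) • σ) := by
    have h := ((Complex.hasSum_sin (θ : ℂ)).mul_left (-Complex.I)).smul_const σ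
    rw [← Complex.ofReal_sin] at h
    rw [hoeq]
    convert h using 2
    ring
  have hsum := HasSum.even_add_odd
    (f := fun n : ℕ => (((n.factorial : ℕ) : ℂ))⁻¹ • (z • σ) ^ n) heven hodd
  have hval : (Real.cos θ : ℂ) • (1 : Matrix (Fin d) (Fin d) ℂ)
      + (-((Real.sin θ : ℂ) * Complex.I)) • σ
      = (Real.cos θ : ℂ) • (1 : Matrix (Fin d) (Fin d) ℂ)
        - ((Real.sin θ : ℂ) * Complex.I) • σ := by
    rw [neg_smul, ← sub_eq_add_neg]
  rw [hval] at hsum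
  exact hsum

/-- **parameter-shift rule for `C_HST`.** For `d × d` unitaries `U,A,B`
and a Hermitian involution `σ`, the map `f(α) = C_HST(U, A e^{−iασ/2} B)` is
differentiable with `f'(α) = (1/2)(f(α + π/2) − f(α − π/2))` for all real `α`. -/
theorem stmt15 (d : ℕ) (hd : 1 ≤ d) (U A B σ : Matrix (Fin d) (Fin d) ℂ)
    (hU : U ∈ Matrix.unitaryGroup (Fin d) ℂ)
    (hA : A ∈ Matrix.unitaryGroup (Fin d) ℂ)
    (hB : B ∈ Matrix.unitaryGroup (Fin d) ℂ)
    (hherm : σᴴ = σ) (hinv : σ * σ = 1) (α : ℝ) :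
    HasDerivAt (fun β : ℝ => CHSTd d U (A * rotGate d σ β * B))
      ((1 / 2) * (CHSTd d U (A * rotGate d σ (α + Real.pi / 2) * B) -
        CHSTd d U (A * rotGate d σ (α - Real.pi / 2) * B))) α := by
  set p : ℝ := ((Bᴴ * (Aᴴ * U)).trace).re with hp
  set q : ℝ := ((Bᴴ * (Aᴴ * U)).trace).im with hq
  set u : ℝ := ((Bᴴ * (σ * (Aᴴ * U))).trace).re with hu
  set v : ℝ := ((Bᴴ * (σ * (Aᴴ * U))).trace).im with hv
  -- conjugate transpose of the rotation gate
  have hG : ∀ β : ℝ, (rotGate d σ β)ᴴ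
      = (Real.cos (β / 2) : ℂ) • (1 : Matrix (Fin d) (Fin d) ℂ)
        + ((Real.sin (β / 2) : ℂ) * Complex.I) • σ := by
    intro β
    rw [rotGate_eq d σ hinv β]
    rw [Matrix.conjTranspose_sub, Matrix.conjTranspose_smul, Matrix.conjTranspose_smul,
      Matrix.conjTranspose_one, hherm, sub_eq_add_neg, ← neg_smul]
    congr 2
    · exact Complex.conj_ofReal _
    · rw [Complex.star_def, RingHom.map_mul, Complex.conj_ofReal, Complex.conj_I]
      ring
  -- the trace as a trigonometric expression
  have htr : ∀ β : ℝ, ((A * rotGate d σ β * B)ᴴ * U).trace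
      = (Real.cos (β / 2) : ℂ) * (Bᴴ * (Aᴴ * U)).trace
        + ((Real.sin (β / 2) : ℂ) * Complex.I) * (Bᴴ * (σ * (Aᴴ * U))).trace := by
    intro β
    simp only [Matrix.conjTranspose_mul, hG, mul_add, add_mul, smul_mul_assoc, mul_smul_comm,
      one_mul, mul_one, Matrix.trace_add, Matrix.trace_smul, smul_eq_mul, mul_assoc]
  -- the cost as an explicit trigonometric function
  have hCH : ∀ β : ℝ, CHSTd d U (A * rotGate d σ β * B)
      = 1 - ((Real.cos (β / 2) * p - Real.sin (β / 2) * v) ^ 2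
          + (Real.cos (β / 2) * q + Real.sin (β / 2) * u) ^ 2) / (d : ℝ) ^ 2 := by
    intro β
    rw [CHSTd, htr β]
    congr 1
    rw [Complex.sq_norm, Complex.normSq_apply]
    simp only [Complex.add_re, Complex.add_im, Complex.mul_re, Complex.mul_im,
      Complex.ofReal_re, Complex.ofReal_im, Complex.I_re, Complex.I_im, hp, hq, hu, hv]
    ring
  set K : ℝ := 1 - ((p ^ 2 + q ^ 2) + (u ^ 2 + v ^ 2)) / (2 * (d : ℝ) ^ 2) with hK
  set a : ℝ := ((p ^ 2 + q ^ 2) - (u ^ 2 + v ^ 2)) / (2 * (d : ℝ) ^ 2) with ha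
  set b : ℝ := (q * u - p * v) / (d : ℝ) ^ 2 with hb
  have hform : ∀ β : ℝ, CHSTd d U (A * rotGate d σ β * B)
      = K - a * Real.cos β - b * Real.sin β := by
    intro β
    rw [hCH β, hK, ha, hb]
    have h1 : Real.cos (β / 2) ^ 2 = 1 / 2 + Real.cos β / 2 := by
      have := Real.cos_sq (β / 2)
      rwa [show 2 * (β / 2) = β by ring] at this
    have h2 : Real.sin (β / 2) ^ 2 = 1 - Real.cos (β / 2) ^ 2 := Real.sin_sq (β / 2)
    have h3 : Real.sin β = 2 * Real.sin (β / 2) * Real.cos (β / 2) := by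
      have := Real.sin_two_mul (β / 2)
      rwa [show 2 * (β / 2) = β by ring] at this
    rw [h3]
    linear_combination (-((p ^ 2 + q ^ 2) - (u ^ 2 + v ^ 2)) / (d : ℝ) ^ 2) * h1
      + (-(u ^ 2 + v ^ 2) / (d : ℝ) ^ 2) * h2
  have hfun : (fun β : ℝ => CHSTd d U (A * rotGate d σ β * B))
      = fun β : ℝ => K - a * Real.cos β - b * Real.sin β := funext hform
  rw [hfun, hform (α + Real.pi / 2), hform (α - Real.pi / 2),
    Real.cos_add_pi_div_two, Real.sin_add_pi_div_two,
    Real.cos_sub_pi_div_two, Real.sin_sub_pi_div_two]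
  have h : HasDerivAt (fun β : ℝ => K - a * Real.cos β - b * Real.sin β)
      (0 - a * -Real.sin α - b * Real.cos α) α := ((hasDerivAt_const α K).sub ((Real.hasDerivAt_cos α).const_mul a)).sub
    ((Real.hasDerivAt_sin α).const_mul b)
  convert h using 1
  ring


end
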